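/- Let (H_i)_{i=1}^{n} be Hilbert spaces and for each i < j let T_{i,j} : H_i → H_j be bounded linear operators with ‖T_{i,j}‖ ≤ 1. Suppose there are nonnegative reals w_1 < w_2 < ... < w_n and a constant C such that for all i < j < k, ‖T_{j,k} ∘ T_{i,j} - T_{i,k}‖ ≤ C² (w_j - w_i)(w_k - w_j). Then ‖T_{n-1,n} ∘ T_{n-2,n-1} ∘ ⋯ ∘ T_{1,2} - T_{1,n}‖ ≤ (C²/2)·(w_n - w_1)². -/
import Mathlib


/-- Composition of the operators between consecutive indices:
`opChain T i k = T_{i+k-1,i+k} ∘ ⋯ ∘ T_{i,i+1} : H i →L H (i+k)`. -/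
def opChain {H : ℕ → Type*} [∀ i, NormedAddCommGroup (H i)]
    [∀ i, InnerProductSpace ℝ (H i)]
    (T : ∀ i j : ℕ, H i →L[ℝ] H j) (i : ℕ) : ∀ k : ℕ, H i →L[ℝ] H (i + k)
  | 0 => ContinuousLinearMap.id ℝ (H i)
  | (k + 1) => (T (i + k) (i + k + 1)).comp (opChain T i k)

/-- if `‖T i j‖ ≤ 1` and the three-point composition discrepancy is bounded by
`C² (w j - w i)(w k - w j)`, then the composition along consecutive points deviates from the
direct operator by at most `(C²/2)(w (i+n) - w i)²`. -/
theorem stmt2 {H : ℕ → Type*} [∀ i, NormedAddCommGroup (H i)]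
    [∀ i, InnerProductSpace ℝ (H i)] [∀ i, CompleteSpace (H i)]
    (T : ∀ i j : ℕ, H i →L[ℝ] H j) (w : ℕ → ℝ) (C : ℝ) (hC : 0 ≤ C)
    (hmono : StrictMono w) (hw0 : 0 ≤ w 0)
    (hnorm : ∀ i j : ℕ, i < j → ‖T i j‖ ≤ 1)
    (hcomp : ∀ i j k : ℕ, i < j → j < k →
      ‖(T j k).comp (T i j) - T i k‖ ≤ C ^ 2 * (w j - w i) * (w k - w j)) :
    ∀ i n : ℕ, 1 ≤ n →
      ‖opChain T i n - T i (i + n)‖ ≤ C ^ 2 / 2 * (w (i + n) - w i) ^ 2 := by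
  intro i n hn
  induction n with
  | zero => omega
  | succ n ih =>
    rcases Nat.eq_or_lt_of_le hn with h1 | h1
    · -- base case n+1 = 1
      have hn0 : n = 0 := by omega
      subst hn0
      have : opChain T i 1 - T i (i + 1) = 0 := by
        simp [opChain]
      rw [this, norm_zero]
      have hw : 0 ≤ w (i + 1) - w i := le_of_lt (sub_pos.mpr (hmono (by omega)))
      positivity
    · have hn1 : 1 ≤ n := by omega
      have IH := ih hn1
      have key : opChain T i (n + 1) - T i (i + (n + 1)) =
          (T (i + n) (i + n + 1)).comp (opChain T i n - T i (i + n)) +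
            ((T (i + n) (i + n + 1)).comp (T i (i + n)) - T i (i + n + 1)) := by
        show (T (i + n) (i + n + 1)).comp (opChain T i n) - T i (i + n + 1) = _
        rw [ContinuousLinearMap.comp_sub]
        abel
      set a := w (i + n) - w i with ha
      set b := w (i + n + 1) - w (i + n) with hb
      have hapos : 0 ≤ a := le_of_lt (sub_pos.mpr (hmono (by omega)))
      have hbpos : 0 ≤ b := le_of_lt (sub_pos.mpr (hmono (by omega)))
      have h2 : ‖(T (i + n) (i + n + 1)).comp (opChain T i n - T i (i + n))‖ ≤
          ‖opChain T i n - T i (i + n)‖ := by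
        calc ‖(T (i + n) (i + n + 1)).comp (opChain T i n - T i (i + n))‖
            ≤ ‖T (i + n) (i + n + 1)‖ * ‖opChain T i n - T i (i + n)‖ :=
              ContinuousLinearMap.opNorm_comp_le _ _
          _ ≤ 1 * ‖opChain T i n - T i (i + n)‖ := by
              gcongr; exacts [hnorm _ _ (by omega)]
          _ = _ := one_mul _
      have h3 := hcomp i (i + n) (i + n + 1) (by omega) (by omega)
      rw [← ha, ← hb] at h3
      clear_value a b
      calc ‖opChain T i (n + 1) - T i (i + (n + 1))‖
          ≤ ‖(T (i + n) (i + n + 1)).comp (opChain T i n - T i (i + n))‖ +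
            ‖(T (i + n) (i + n + 1)).comp (T i (i + n)) - T i (i + n + 1)‖ := by
            rw [key]; exact norm_add_le _ _
        _ ≤ C ^ 2 / 2 * a ^ 2 + C ^ 2 * a * b :=
            add_le_add (h2.trans IH) h3
        _ ≤ C ^ 2 / 2 * (w (i + (n + 1)) - w i) ^ 2 := by
            have : w (i + (n + 1)) - w i = a + b := by
              simp only [ha, hb, show i + (n + 1) = i + n + 1 from rfl]; ring
            rw [this]
            have hC2 : 0 ≤ C ^ 2 := sq_nonneg C
            nlinarith [mul_nonneg hC2 (sq_nonneg b)]
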